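/- Let H be a k-dimensional subspace of ℝ^n with orthogonal complement H^⊥, and let P and P^⊥ be the orthogonal projections onto H and H^⊥. Then for every k-element subset L ⊆ {1,...,n}, the principal minor of P on rows and columns L equals the principal minor of P^⊥ on rows and columns {1,...,n} \ L: P_L = P^⊥_{[n]∖L}. -/

import Mathlib

open Matrix

lemma key_minor {k n : ℕ} (R : Matrix (Fin n) (Fin k) ℝ) (S : Matrix (Fin k) (Fin n) ℝ)
    (hSR : S * R = 1) (L : Finset (Fin n)) (hL : L.card = k) :
    Matrix.det (Matrix.of fun a b : ↥L => (R * S) a b) =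
      Matrix.det (Matrix.of fun a b : ↥(Lᶜ) =>
        ((1 - R * S : Matrix (Fin n) (Fin n) ℝ)) a b) := by
  classical
  have hcard : Fintype.card ↥L = k := by simpa using hL
  let e : ↥L ≃ Fin k := Fintype.equivFinOfCardEq hcard
  let A : Matrix (Fin k) (Fin k) ℝ := fun i j => R (e.symm i) j
  let B : Matrix (Fin k) (Fin k) ℝ := fun i j => S i (e.symm j)
  let C : Matrix ↥(Lᶜ) (Fin k) ℝ := fun a x => R a x
  let D : Matrix (Fin k) ↥(Lᶜ) ℝ := fun x b => S x b
  have h1 : (Matrix.of fun a b : ↥L => (R * S) a b) = (A * B).submatrix e e := by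
    ext a b
    simp only [Matrix.of_apply, Matrix.submatrix_apply, Matrix.mul_apply]
    simp only [A, B,
      Equiv.symm_apply_apply]
  have h2 : (Matrix.of fun a b : ↥(Lᶜ) =>
      ((1 - R * S : Matrix (Fin n) (Fin n) ℝ)) a b) = 1 - C * D := by
    ext a b
    simp only [Matrix.of_apply, Matrix.sub_apply, Matrix.mul_apply]
    by_cases h : a = b
    · simp [h, Matrix.sub_apply, Matrix.mul_apply, Matrix.one_apply, C, D]
    · have h' : (a : Fin n) ≠ (b : Fin n) := fun hc => h (Subtype.ext hc)
      simp [h, h', Matrix.sub_apply, Matrix.mul_apply, Matrix.one_apply, C, D]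
  have hsplit : ∀ x y, (S * R) x y = (B * A) x y + (D * C) x y := by
    intro x y
    simp only [Matrix.mul_apply, B, A, D, C]
    rw [← Finset.sum_add_sum_compl L fun b => S x b * R b y]
    congr 1
    · rw [← Finset.sum_coe_sort L fun b => S x b * R b y]
      exact Fintype.sum_equiv e (fun b => S x b * R b y)
        (fun j => S x (e.symm j) * R (e.symm j) y)
        (fun b => by simp)
    · exact (Finset.sum_coe_sort (Lᶜ) fun b => S x b * R b y).symm
  have h3 : B * A = 1 - D * C := by
    ext x y
    have h := hsplit x y
    rw [hSR] at h
    rw [Matrix.sub_apply, h]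
    ring
  rw [h1, h2, Matrix.det_submatrix_equiv_self, Matrix.det_one_sub_mul_comm, ← h3,
    Matrix.det_mul, Matrix.det_mul, mul_comm]


/-- let `H` be a `k`-dimensional subspace of `ℝ^n` with orthogonal
complement `H^⊥`, and let `P`, `Pc` be the matrices of the orthogonal
projections onto `H` and `H^⊥`. Then for every `k`-element subset
`L ⊆ {1, ..., n}`, the principal minor of `P` on rows and columns `L` equals the
principal minor of `Pc` on the complementary set: `P_L = P^⊥_{[n]∖L}`. -/
theorem stmt_9 (n k : ℕ) (H : Submodule ℝ (EuclideanSpace ℝ (Fin n)))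
    (hH : Module.finrank ℝ H = k)
    (P Pc : Matrix (Fin n) (Fin n) ℝ)
    (hP : Matrix.toEuclideanLin P = (H.subtypeL.comp H.orthogonalProjection).toLinearMap)
    (hPc : Matrix.toEuclideanLin Pc = (Hᗮ.subtypeL.comp Hᗮ.orthogonalProjection).toLinearMap)
    (L : Finset (Fin n)) (hL : L.card = k) :
    Matrix.det (Matrix.of fun a b : ↥L => P a b) =
      Matrix.det (Matrix.of fun a b : ↥(Lᶜ) => Pc a b) := by
  classical
  let bE : Module.Basis (Fin n) ℝ (EuclideanSpace ℝ (Fin n)) := PiLp.basisFun 2 ℝ (Fin n)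
  let b : Module.Basis (Fin k) ℝ H := Module.finBasisOfFinrankEq ℝ H hH
  let R : Matrix (Fin n) (Fin k) ℝ := LinearMap.toMatrix b bE H.subtype
  let S : Matrix (Fin k) (Fin n) ℝ :=
    LinearMap.toMatrix bE b (H.orthogonalProjection : EuclideanSpace ℝ (Fin n) →ₗ[ℝ] H)
  have hP' : P = R * S := by
    have h := hP
    rw [Matrix.toEuclideanLin_eq_toLin] at h
    apply (Matrix.toLin bE bE).injective
    rw [h]
    show _ = Matrix.toLin bE bE (LinearMap.toMatrix b bE H.subtype *
      LinearMap.toMatrix bE b (H.orthogonalProjection : EuclideanSpace ℝ (Fin n) →ₗ[ℝ] H))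
    rw [← LinearMap.toMatrix_comp bE b bE, Matrix.toLin_toMatrix]
    rfl
  have hSR : S * R = 1 := by
    show LinearMap.toMatrix bE b _ * LinearMap.toMatrix b bE _ = 1
    rw [← LinearMap.toMatrix_comp b bE b, ← LinearMap.toMatrix_id b]
    congr 1
    ext x
    simp
  have hPc' : Pc = 1 - R * S := by
    rw [← hP']
    apply Matrix.toEuclideanLin.injective
    have hone : Matrix.toEuclideanLin (1 : Matrix (Fin n) (Fin n) ℝ) = LinearMap.id := by
      rw [Matrix.toEuclideanLin_eq_toLin]; simp
    rw [map_sub, hPc, hP, hone]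
    have h := Submodule.id_eq_sum_starProjection_self_orthogonalComplement (𝕜 := ℝ) (K := H)
    have h2 := congrArg ContinuousLinearMap.toLinearMap h
    simp only [ContinuousLinearMap.coe_id, ContinuousLinearMap.coe_add, Submodule.starProjection] at h2
    rw [h2]
    abel
  rw [hP', hPc']
  exact key_minor R S hSR L hL
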